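/- Let G be a charged signed graph that is equivalent to a connected induced subgraph of one of T_{2k}, C_{2k}^{++}, C_{2k}^{+−} (for some k), and suppose the path rank of G is at least 5. Then G has a profile; the number of columns of any profile of G (the profile rank) equals the path rank of G; the partition of the vertex set of G into columns is uniquely determined; and the ordering of the columns is determined up to reversal and, for cycling profiles, cyclic permutation. -/

import Mathlib

open Polynomial Matrix

noncomputable section

/-- Lehmer's polynomial. -/
def lehmer : Polynomial ℤ :=
  X ^ 10 + X ^ 9 - X ^ 7 - X ^ 6 - X ^ 5 - X ^ 4 - X ^ 3 + X + 1

/-- Spectral radius of an integer symmetric matrix: the maximum of the absolute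
values of the (real) roots of its characteristic polynomial. -/
def specRad {d : ℕ} (A : Matrix (Fin d) (Fin d) ℤ) : ℝ :=
  sSup {r : ℝ | ∃ x ∈ (A.charpoly.map (Int.castRingHom ℝ)).roots, |x| = r}

/-- The associated reciprocal polynomial `z^d * p(z + 1/z)` of a polynomial `p`
of degree (at most) `d`. -/
def recipPoly (d : ℕ) (p : Polynomial ℤ) : Polynomial ℤ :=
  ∑ i ∈ Finset.range (d + 1), Polynomial.C (p.coeff i) * X ^ (d - i) * (X ^ 2 + 1) ^ i

/-- Mahler measure of an integer symmetric matrix: the Mahler measure of its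
associated reciprocal polynomial. -/
def mahlerMeasure {d : ℕ} (A : Matrix (Fin d) (Fin d) ℤ) : ℝ :=
  ((((recipPoly d A.charpoly).map (Int.castRingHom ℂ)).roots).map
    (fun z => max 1 ‖z‖)).prod

/-- Equivalence of integer symmetric matrices: `B = ε • (Pᵀ * A * P)` for a sign `ε`
and a signed permutation matrix `P`. -/
def MEquiv {m n : Type*} [Fintype m] [DecidableEq m] [Fintype n] [DecidableEq n]
    (A : Matrix m m ℤ) (B : Matrix n n ℤ) : Prop :=
  ∃ (ε : ℤ) (P : Matrix m n ℤ), (ε = 1 ∨ ε = -1) ∧ Pᵀ * P = 1 ∧ P * Pᵀ = 1 ∧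
    B = ε • (Pᵀ * A * P)

/-- A matrix is indecomposable when its underlying graph is connected. -/
def Indecomposable {m : Type*} [Fintype m] (A : Matrix m m ℤ) : Prop :=
  (SimpleGraph.fromRel (fun i j => A i j ≠ 0)).Connected

/-- The principal submatrix obtained by deleting row `i` and column `i`. -/
def deleteRC {d : ℕ} (A : Matrix (Fin d) (Fin d) ℤ) (i : Fin d) :
    Matrix (Fin (d - 1)) (Fin (d - 1)) ℤ :=
  A.submatrix
    (fun j => Fin.cast (Nat.succ_pred_eq_of_pos i.pos)
      ((Fin.cast (Nat.succ_pred_eq_of_pos i.pos).symm i).succAbove j))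
    (fun j => Fin.cast (Nat.succ_pred_eq_of_pos i.pos)
      ((Fin.cast (Nat.succ_pred_eq_of_pos i.pos).symm i).succAbove j))

/-- Minimal noncyclotomic matrices. -/
def MinimalNoncyclotomic {d : ℕ} (A : Matrix (Fin d) (Fin d) ℤ) : Prop :=
  2 < specRad A ∧ ∀ i : Fin d, specRad (deleteRC A i) ≤ 2


/-- The adjacency matrix of the starlike tree `T_{1,2,6}`: vertex `0` is the central
vertex, with arms `1`; `2-3`; `4-5-6-7-8-9`. -/
def T126 : Matrix (Fin 10) (Fin 10) ℤ :=
  Matrix.of fun i j =>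
    if (i, j) ∈ ([(0,1),(0,2),(2,3),(0,4),(4,5),(5,6),(6,7),(7,8),(8,9)] :
          List (Fin 10 × Fin 10)) ∨
       (j, i) ∈ ([(0,1),(0,2),(2,3),(0,4),(4,5),(5,6),(6,7),(7,8),(8,9)] :
          List (Fin 10 × Fin 10))
    then 1 else 0

def M5u : Matrix (Fin 5) (Fin 5) ℤ :=
  !![0,1,0,0,0; 1,0,1,0,0; 0,1,0,1,1; 0,0,1,0,1; 0,0,1,1,-1]

def M5N : Matrix (Fin 5) (Fin 5) ℤ :=
  !![1,1,0,0,0; 1,-1,1,0,0; 0,1,0,1,0; 0,0,1,0,1; 0,0,0,1,1]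

/-- The induced submatrix (induced subgraph) on a finite set of indices. -/
def induce {V : Type*} (A : Matrix V V ℤ) (S : Finset V) :
    Matrix {x // x ∈ S} {x // x ∈ S} ℤ :=
  A.submatrix Subtype.val Subtype.val

/-- The adjacency matrix of the toral tesselation `T_{2k}` (for `k ≥ 3`), with vertex set
`(ℤ/k) × {1,2}` realised as `Fin k × Fin 2`: column `i` is joined to column `i+1 (mod k)`,
with edge signs `+1` from `(i,0)` and `-1` from `(i,1)`. -/
def Tmat (k : ℕ) : Matrix (Fin k × Fin 2) (Fin k × Fin 2) ℤ :=
  Matrix.of fun u v =>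
    (if ((u.1 : ℕ) + 1) % k = (v.1 : ℕ) then (if u.2 = 0 then 1 else -1) else 0) +
    (if ((v.1 : ℕ) + 1) % k = (u.1 : ℕ) then (if v.2 = 0 then 1 else -1) else 0)

/-- The adjacency matrix of the cylindrical tesselation `C_{2k}^{±±}` (for `k ≥ 2`), with
vertex set `Fin k × Fin 2`; the last column carries charges `ch` and a vertical edge of
sign `es`.  `C_{2k}^{++} = Cmat k 1 (-1)` and `C_{2k}^{+-} = Cmat k (-1) 1`. -/
def Cmat (k : ℕ) (ch es : ℤ) : Matrix (Fin k × Fin 2) (Fin k × Fin 2) ℤ :=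
  Matrix.of fun u v =>
    if u.1 = v.1 then
      (if (u.1 : ℕ) = 0 then 1
       else if (u.1 : ℕ) = k - 1 then (if u.2 = v.2 then ch else es)
       else 0)
    else if (u.1 : ℕ) + 1 = (v.1 : ℕ) then (if u.2 = 0 then 1 else -1)
    else if (v.1 : ℕ) + 1 = (u.1 : ℕ) then (if v.2 = 0 then 1 else -1)
    else 0

/-- The underlying simple graph of a charged signed graph (adjacency matrix). -/
def graphOf {V : Type*} (A : Matrix V V ℤ) : SimpleGraph V :=
  SimpleGraph.fromRel (fun i j => A i j ≠ 0)

/-- `G` has a chordless path or chordless cycle with `n` vertices. -/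
def HasChordless {V : Type*} (G : SimpleGraph V) (n : ℕ) : Prop :=
  (∃ f : Fin n → V, Function.Injective f ∧
      ∀ i j : Fin n, G.Adj (f i) (f j) ↔ ((i : ℕ) + 1 = (j : ℕ) ∨ (j : ℕ) + 1 = (i : ℕ))) ∨
  (3 ≤ n ∧ ∃ f : Fin n → V, Function.Injective f ∧
      ∀ i j : Fin n, G.Adj (f i) (f j) ↔
        (((i : ℕ) + 1) % n = (j : ℕ) ∨ ((j : ℕ) + 1) % n = (i : ℕ)))

/-- The path rank of `G`: the maximal number of vertices of a chordless path or
chordless cycle. -/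
def pathRank {V : Type*} [Fintype V] (G : SimpleGraph V) : ℕ :=
  sSup {n | HasChordless G n}

/-- A profile of a charged signed graph `A`, given by a surjection `c` onto the `k ≥ 3`
columns (`cyc` records whether the profile is cycling): each column consists of vertices
with equal charge, and two distinct vertices are adjacent iff they lie in consecutive
columns or are charged vertices in a common column. -/
def IsProfile {V : Type*} (A : Matrix V V ℤ) (k : ℕ) (cyc : Bool) (c : V → Fin k) : Prop :=
  3 ≤ k ∧ Function.Surjective c ∧
  (∀ u v : V, c u = c v → A u u = A v v) ∧
  (∀ u v : V, u ≠ v →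
    (A u v ≠ 0 ↔
      ((if cyc then (((c u : ℕ) + 1) % k = (c v : ℕ) ∨ ((c v : ℕ) + 1) % k = (c u : ℕ))
        else ((c u : ℕ) + 1 = (c v : ℕ) ∨ (c v : ℕ) + 1 = (c u : ℕ)))
       ∨ (c u = c v ∧ A u u ≠ 0))))


/-- `A` is equivalent to an induced subgraph of some `T_{2k}` (`k ≥ 3`),
`C_{2k}^{++}` or `C_{2k}^{+-}` (`k ≥ 2`). -/
def EmbedsInTorC {V : Type*} [Fintype V] [DecidableEq V] (A : Matrix V V ℤ) : Prop :=
  ∃ k : ℕ,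
    (∃ S : Finset (Fin (k + 3) × Fin 2), MEquiv A (induce (Tmat (k + 3)) S)) ∨
    (∃ S : Finset (Fin (k + 2) × Fin 2),
      MEquiv A (induce (Cmat (k + 2) 1 (-1)) S) ∨ MEquiv A (induce (Cmat (k + 2) (-1) 1) S))

/-- `A` is equivalent to a *connected* induced subgraph of some `T_{2k}` (`k ≥ 3`),
`C_{2k}^{++}` or `C_{2k}^{+-}` (`k ≥ 2`). -/
def EquivConnSub {V : Type*} [Fintype V] [DecidableEq V] (A : Matrix V V ℤ) : Prop :=
  ∃ k : ℕ,
    (∃ S : Finset (Fin (k + 3) × Fin 2),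
      Indecomposable (induce (Tmat (k + 3)) S) ∧ MEquiv A (induce (Tmat (k + 3)) S)) ∨
    (∃ S : Finset (Fin (k + 2) × Fin 2),
      (Indecomposable (induce (Cmat (k + 2) 1 (-1)) S) ∧
        MEquiv A (induce (Cmat (k + 2) 1 (-1)) S)) ∨
      (Indecomposable (induce (Cmat (k + 2) (-1) 1) S) ∧
        MEquiv A (induce (Cmat (k + 2) (-1) 1) S)))

def Consec (cyc : Bool) (k : ℕ) (x y : Fin k) : Prop :=
  (if cyc then (((x : ℕ) + 1) % k = (y : ℕ) ∨ ((y : ℕ) + 1) % k = (x : ℕ))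
        else ((x : ℕ) + 1 = (y : ℕ) ∨ (y : ℕ) + 1 = (x : ℕ)))

def WeakProfile {V : Type*} (A : Matrix V V ℤ) (k : ℕ) (cyc : Bool) (c : V → Fin k) : Prop :=
  Function.Surjective c ∧
  (∀ u v : V, c u = c v → A u u = A v v) ∧
  (∀ u v : V, u ≠ v →
    (A u v ≠ 0 ↔ (Consec cyc k (c u) (c v) ∨ (c u = c v ∧ A u u ≠ 0))))


lemma consecT {k : ℕ} (x y : Fin k) :
    Consec true k x y ↔ (((x : ℕ) + 1) % k = (y : ℕ) ∨ ((y : ℕ) + 1) % k = (x : ℕ)) := by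
  simp [Consec]

lemma consecF {k : ℕ} (x y : Fin k) :
    Consec false k x y ↔ ((x : ℕ) + 1 = (y : ℕ) ∨ (y : ℕ) + 1 = (x : ℕ)) := by
  simp [Consec]

lemma smod {nn : ℕ} {x : ℕ} (hx : x < nn) (y : ℕ) :
    ((x + 1) % nn = y) ↔ ((x + 1 = nn ∧ y = 0) ∨ (x + 1 < nn ∧ y = x + 1)) := by
  rcases Nat.lt_or_ge (x+1) nn with h | h
  · rw [Nat.mod_eq_of_lt h]; omega
  · have hx1 : x + 1 = nn := by omega
    rw [hx1, Nat.mod_self]; omega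

lemma consec_irrefl {cyc : Bool} {k : ℕ} (hc3 : cyc = true → 3 ≤ k) (x : Fin k) :
    ¬ Consec cyc k x x := by
  cases cyc with
  | false => rw [consecF]; omega
  | true =>
    have h3 := hc3 rfl
    rw [consecT, smod x.isLt]
    omega

lemma consec_symm {cyc : Bool} {k : ℕ} {x y : Fin k} (h : Consec cyc k x y) :
    Consec cyc k y x := by
  cases cyc
  · rw [consecF] at h ⊢; tauto
  · rw [consecT] at h ⊢; tauto

lemma path_inj {k nn : ℕ} (hnn : 4 ≤ nn) {cyc : Bool} (hc3 : cyc = true → 3 ≤ k)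
    (g : Fin nn → Fin k) (chg : Fin nn → Prop)
    (Hc : ∀ i j, g i = g j → (chg i ↔ chg j))
    (H : ∀ i j, i ≠ j → ((Consec cyc k (g i) (g j) ∨ (g i = g j ∧ chg i)) ↔
         ((i:ℕ)+1 = (j:ℕ) ∨ (j:ℕ)+1 = (i:ℕ)))) :
    Function.Injective g := by
  have aux : ∀ i j : Fin nn, (i:ℕ) < (j:ℕ) → g i = g j → False := by
    intro i j hij hg
    have hi := i.isLt; have hj := j.isLt
    have hne : i ≠ j := Fin.ne_of_val_ne (by omega)
    by_cases hch : chg i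
    · have hstep := (H i j hne).1 (Or.inr ⟨hg, hch⟩)
      have hj1 : (j:ℕ) = (i:ℕ) + 1 := by omega
      rcases Nat.eq_zero_or_pos (i:ℕ) with hi0 | hipos
      · -- i = 0, j = 1, use l = 2
        set l : Fin nn := ⟨2, by omega⟩ with hldef
        have hlv : (l:ℕ) = 2 := rfl
        have hjl : j ≠ l := Fin.ne_of_val_ne (by omega)
        have hil : i ≠ l := Fin.ne_of_val_ne (by omega)
        have h1 := (H j l hjl).2 (by omega)
        rcases h1 with hcs | ⟨hEq, hchj⟩
        · have hcs' : Consec cyc k (g i) (g l) := by rw [hg]; exact hcs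
          have := (H i l hil).1 (Or.inl hcs')
          omega
        · have := (H i l hil).1 (Or.inr ⟨hg.trans hEq, hch⟩)
          omega
      · set l : Fin nn := ⟨(i:ℕ)-1, by omega⟩ with hldef
        have hlv : (l:ℕ) = (i:ℕ)-1 := rfl
        have hli : l ≠ i := Fin.ne_of_val_ne (by omega)
        have hlj : l ≠ j := Fin.ne_of_val_ne (by omega)
        have h1 := (H l i hli).2 (by omega)
        rcases h1 with hcs | ⟨hEq, hchl⟩
        · have hcs' : Consec cyc k (g l) (g j) := by rw [← hg]; exact hcs
          have := (H l j hlj).1 (Or.inl hcs')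
          omega
        · have := (H l j hlj).1 (Or.inr ⟨hEq.trans hg, hchl⟩)
          omega
    · -- neutral case
      have hj2 : (i:ℕ) + 2 ≤ (j:ℕ) := by
        rcases Nat.lt_or_ge ((i:ℕ)+1) (j:ℕ) with h | h
        · omega
        · exfalso
          have := (H i j hne).2 (Or.inl (by omega))
          rcases this with hcs | ⟨_, hchi⟩
          · rw [hg] at hcs; exact consec_irrefl hc3 _ hcs
          · exact hch hchi
      have hji2 : (j:ℕ) = (i:ℕ) + 2 := by
        set l : Fin nn := ⟨(j:ℕ)-1, by omega⟩ with hldef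
        have hlv : (l:ℕ) = (j:ℕ)-1 := rfl
        have hlj : l ≠ j := Fin.ne_of_val_ne (by omega)
        have hli : l ≠ i := Fin.ne_of_val_ne (by omega)
        have h1 := (H l j hlj).2 (by omega)
        rcases h1 with hcs | ⟨hEq, hchl⟩
        · have hcs' : Consec cyc k (g l) (g i) := by rw [hg]; exact hcs
          have := (H l i hli).1 (Or.inl hcs')
          omega
        · exact absurd (((Hc l j hEq).trans (Hc j i hg.symm)).1 hchl) hch
      have hi0 : (i:ℕ) = 0 := by
        by_contra hi0
        set l : Fin nn := ⟨(i:ℕ)-1, by omega⟩ with hldef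
        have hlv : (l:ℕ) = (i:ℕ)-1 := rfl
        have hli : l ≠ i := Fin.ne_of_val_ne (by omega)
        have hlj : l ≠ j := Fin.ne_of_val_ne (by omega)
        have h1 := (H l i hli).2 (by omega)
        rcases h1 with hcs | ⟨hEq, hchl⟩
        · have hcs' : Consec cyc k (g l) (g j) := by rw [← hg]; exact hcs
          have := (H l j hlj).1 (Or.inl hcs')
          omega
        · exact absurd ((Hc l i hEq).1 hchl) hch
      set l : Fin nn := ⟨(j:ℕ)+1, by omega⟩ with hldef
      have hlv : (l:ℕ) = (j:ℕ)+1 := rfl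
      have hjl : j ≠ l := Fin.ne_of_val_ne (by omega)
      have hil : i ≠ l := Fin.ne_of_val_ne (by omega)
      have h1 := (H j l hjl).2 (by omega)
      rcases h1 with hcs | ⟨hEq, hchj⟩
      · have hcs' : Consec cyc k (g i) (g l) := by rw [hg]; exact hcs
        have := (H i l hil).1 (Or.inl hcs')
        omega
      · exact absurd ((Hc j i hg.symm).1 hchj) hch
  intro i j hg
  by_contra hne
  rcases Nat.lt_trichotomy (i:ℕ) (j:ℕ) with h | h | h
  · exact aux i j h hg
  · exact hne (Fin.ext h)
  · exact aux j i h hg.symm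

lemma cycle_inj {k nn : ℕ} (hnn : 5 ≤ nn) {cyc : Bool} (hc3 : cyc = true → 3 ≤ k)
    (g : Fin nn → Fin k) (chg : Fin nn → Prop)
    (Hc : ∀ i j, g i = g j → (chg i ↔ chg j))
    (H : ∀ i j, i ≠ j → ((Consec cyc k (g i) (g j) ∨ (g i = g j ∧ chg i)) ↔
         (((i:ℕ)+1) % nn = (j:ℕ) ∨ (((j:ℕ)+1) % nn = (i:ℕ))))) :
    Function.Injective g := by
  have aux : ∀ i j : Fin nn, (i:ℕ) < (j:ℕ) → g i = g j → False := by
    intro i j hij hg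
    have hi := i.isLt; have hj := j.isLt
    have hne : i ≠ j := Fin.ne_of_val_ne (by omega)
    by_cases hch : chg i
    · have hstep := (H i j hne).1 (Or.inr ⟨hg, hch⟩)
      rw [smod hi, smod hj] at hstep
      rcases (by omega : (j:ℕ) = (i:ℕ)+1 ∨ ((i:ℕ) = 0 ∧ (j:ℕ) = nn - 1)) with hj1 | ⟨hi0, hjn⟩
      · rcases Nat.eq_zero_or_pos (i:ℕ) with hi0 | hipos
        · -- i = 0, j = 1, l = nn-1
          set l : Fin nn := ⟨nn-1, by omega⟩ with hldef
          have hlv : (l:ℕ) = nn-1 := rfl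
          have hli : l ≠ i := Fin.ne_of_val_ne (by omega)
          have hlj : l ≠ j := Fin.ne_of_val_ne (by omega)
          have h1 := (H l i hli).2 (by rw [smod l.isLt, smod hi]; omega)
          rcases h1 with hcs | ⟨hEq, hchl⟩
          · have hcs' : Consec cyc k (g l) (g j) := by rw [← hg]; exact hcs
            have := (H l j hlj).1 (Or.inl hcs')
            rw [smod l.isLt, smod hj] at this; omega
          · have := (H l j hlj).1 (Or.inr ⟨hEq.trans hg, hchl⟩)
            rw [smod l.isLt, smod hj] at this; omega
        · set l : Fin nn := ⟨(i:ℕ)-1, by omega⟩ with hldef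
          have hlv : (l:ℕ) = (i:ℕ)-1 := rfl
          have hli : l ≠ i := Fin.ne_of_val_ne (by omega)
          have hlj : l ≠ j := Fin.ne_of_val_ne (by omega)
          have h1 := (H l i hli).2 (by rw [smod l.isLt, smod hi]; omega)
          rcases h1 with hcs | ⟨hEq, hchl⟩
          · have hcs' : Consec cyc k (g l) (g j) := by rw [← hg]; exact hcs
            have := (H l j hlj).1 (Or.inl hcs')
            rw [smod l.isLt, smod hj] at this; omega
          · have := (H l j hlj).1 (Or.inr ⟨hEq.trans hg, hchl⟩)
            rw [smod l.isLt, smod hj] at this; omega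
      · -- i = 0, j = nn-1, l = 1
        set l : Fin nn := ⟨1, by omega⟩ with hldef
        have hlv : (l:ℕ) = 1 := rfl
        have hil : i ≠ l := Fin.ne_of_val_ne (by omega)
        have hlj : l ≠ j := Fin.ne_of_val_ne (by omega)
        have hjl : j ≠ l := Fin.ne_of_val_ne (by omega)
        have h1 := (H i l hil).2 (by rw [smod hi, smod l.isLt]; omega)
        rcases h1 with hcs | ⟨hEq, _⟩
        · have hcs' : Consec cyc k (g j) (g l) := by rw [← hg]; exact hcs
          have := (H j l hjl).1 (Or.inl hcs')
          rw [smod hj, smod l.isLt] at this; omega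
        · have := (H l j hlj).1 (Or.inr ⟨hEq.symm.trans hg, (Hc i l hEq).1 hch⟩)
          rw [smod l.isLt, smod hj] at this; omega
    · -- neutral
      have hnstep : ¬(((i:ℕ)+1) % nn = (j:ℕ) ∨ (((j:ℕ)+1) % nn = (i:ℕ))) := by
        intro hstep
        rcases (H i j hne).2 hstep with hcs | ⟨_, hchi⟩
        · rw [hg] at hcs; exact consec_irrefl hc3 _ hcs
        · exact hch hchi
      rw [smod hi, smod hj] at hnstep
      have hj2 : (i:ℕ) + 2 ≤ (j:ℕ) := by omega
      have hji2 : (j:ℕ) = (i:ℕ) + 2 := by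
        set l : Fin nn := ⟨(j:ℕ)-1, by omega⟩ with hldef
        have hlv : (l:ℕ) = (j:ℕ)-1 := rfl
        have hlj : l ≠ j := Fin.ne_of_val_ne (by omega)
        have hli : l ≠ i := Fin.ne_of_val_ne (by omega)
        have h1 := (H l j hlj).2 (by rw [smod l.isLt, smod hj]; omega)
        rcases h1 with hcs | ⟨hEq, hchl⟩
        · have hcs' : Consec cyc k (g l) (g i) := by rw [hg]; exact hcs
          have := (H l i hli).1 (Or.inl hcs')
          rw [smod l.isLt, smod hi] at this; omega
        · exact absurd (((Hc l j hEq).trans (Hc j i hg.symm)).1 hchl) hch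
      rcases Nat.lt_or_ge ((j:ℕ)+1) nn with hjlt | hjge
      · set l : Fin nn := ⟨(j:ℕ)+1, by omega⟩ with hldef
        have hlv : (l:ℕ) = (j:ℕ)+1 := rfl
        have hjl : j ≠ l := Fin.ne_of_val_ne (by omega)
        have hil : i ≠ l := Fin.ne_of_val_ne (by omega)
        have h1 := (H j l hjl).2 (by rw [smod hj, smod l.isLt]; omega)
        rcases h1 with hcs | ⟨hEq, hchj⟩
        · have hcs' : Consec cyc k (g i) (g l) := by rw [hg]; exact hcs
          have := (H i l hil).1 (Or.inl hcs')
          rw [smod hi, smod l.isLt] at this; omega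
        · exact absurd ((Hc j i hg.symm).1 hchj) hch
      · -- j = nn - 1
        set l : Fin nn := ⟨0, by omega⟩ with hldef
        have hlv : (l:ℕ) = 0 := rfl
        have hjl : j ≠ l := Fin.ne_of_val_ne (by omega)
        have hil : i ≠ l := Fin.ne_of_val_ne (by omega)
        have h1 := (H j l hjl).2 (by rw [smod hj, smod l.isLt]; omega)
        rcases h1 with hcs | ⟨hEq, hchj⟩
        · have hcs' : Consec cyc k (g i) (g l) := by rw [hg]; exact hcs
          have := (H i l hil).1 (Or.inl hcs')
          rw [smod hi, smod l.isLt] at this; omega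
        · exact absurd ((Hc j i hg.symm).1 hchj) hch
  intro i j hg
  by_contra hne
  rcases Nat.lt_trichotomy (i:ℕ) (j:ℕ) with h | h | h
  · exact aux i j h hg
  · exact hne (Fin.ext h)
  · exact aux j i h hg.symm

lemma weak_adj {V : Type*} {A : Matrix V V ℤ} {m : ℕ} {cyc : Bool} {c : V → Fin m}
    (hW : WeakProfile A m cyc c) {u v : V} (h : u ≠ v) :
    (graphOf A).Adj u v ↔ (Consec cyc m (c u) (c v) ∨ (c u = c v ∧ A u u ≠ 0)) := by
  unfold graphOf
  rw [SimpleGraph.fromRel_adj]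
  constructor
  · rintro ⟨-, h1 | h1⟩
    · exact (hW.2.2 u v h).1 h1
    · rcases (hW.2.2 v u h.symm).1 h1 with hcs | ⟨hEq, hch⟩
      · exact Or.inl (consec_symm hcs)
      · exact Or.inr ⟨hEq.symm, by rwa [hW.2.1 u v hEq.symm]⟩
  · intro h1
    exact ⟨h, Or.inl ((hW.2.2 u v h).2 h1)⟩

lemma weak_bound {V : Type*} {A : Matrix V V ℤ} {m : ℕ} {cyc : Bool} {c : V → Fin m}
    (hW : WeakProfile A m cyc c) (hc3 : cyc = true → 3 ≤ m) {nn : ℕ}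
    (h : HasChordless (graphOf A) nn) : nn ≤ max 4 m := by
  rcases Nat.lt_or_ge nn 5 with h5 | h5
  · omega
  have hle : nn ≤ m → nn ≤ max 4 m := fun h => le_trans h (le_max_right _ _)
  rcases h with ⟨f, hfinj, hadj⟩ | ⟨h3, f, hfinj, hadj⟩
  · apply hle
    have Hinj : Function.Injective (fun i => c (f i)) :=
      path_inj (by omega) hc3 _ (fun i => A (f i) (f i) ≠ 0)
        (fun i j hg => by show A (f i) (f i) ≠ 0 ↔ A (f j) (f j) ≠ 0; rw [hW.2.1 (f i) (f j) hg])
        (fun i j hij =>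
          (weak_adj hW (fun hc => hij (hfinj hc))).symm.trans (hadj i j))
    have := Fintype.card_le_of_injective _ Hinj
    simpa using this
  · apply hle
    have Hinj : Function.Injective (fun i => c (f i)) :=
      cycle_inj (by omega) hc3 _ (fun i => A (f i) (f i) ≠ 0)
        (fun i j hg => by show A (f i) (f i) ≠ 0 ↔ A (f j) (f j) ≠ 0; rw [hW.2.1 (f i) (f j) hg])
        (fun i j hij =>
          (weak_adj hW (fun hc => hij (hfinj hc))).symm.trans (hadj i j))
    have := Fintype.card_le_of_injective _ Hinj
    simpa using this

lemma weak_has {V : Type*} {A : Matrix V V ℤ} {m : ℕ} {cyc : Bool} {c : V → Fin m}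
    (hW : WeakProfile A m cyc c) (hm : 5 ≤ m) :
    HasChordless (graphOf A) m := by
  set f : Fin m → V := Function.surjInv hW.1 with hf
  have hcf : ∀ x, c (f x) = x := fun x => Function.surjInv_eq hW.1 x
  have hfinj : Function.Injective f := by
    intro a b h
    have := congrArg c h
    rwa [hcf, hcf] at this
  cases cyc with
  | false =>
    left
    refine ⟨f, hfinj, fun i j => ?_⟩
    rcases eq_or_ne i j with rfl | hne
    · exact iff_of_false (SimpleGraph.irrefl _) (by omega)
    · rw [weak_adj hW (fun h => hne (hfinj h)), hcf, hcf]
      constructor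
      · rintro (hcs | ⟨hEq, -⟩)
        · exact (consecF i j).1 hcs
        · exact absurd hEq hne
      · intro h
        exact Or.inl ((consecF i j).2 h)
  | true =>
    right
    refine ⟨by omega, f, hfinj, fun i j => ?_⟩
    rcases eq_or_ne i j with rfl | hne
    · exact iff_of_false (SimpleGraph.irrefl _) (by rw [smod i.isLt]; omega)
    · rw [weak_adj hW (fun h => hne (hfinj h)), hcf, hcf]
      constructor
      · rintro (hcs | ⟨hEq, -⟩)
        · exact (consecT i j).1 hcs
        · exact absurd hEq hne
      · intro h
        exact Or.inl ((consecT i j).2 h)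

lemma hasChordless_zero {V : Type*} (G : SimpleGraph V) : HasChordless G 0 :=
  Or.inl ⟨Fin.elim0, fun a => a.elim0, fun i => i.elim0⟩

lemma hasChordless_card {V : Type*} [Fintype V] {G : SimpleGraph V} {nn : ℕ}
    (h : HasChordless G nn) : nn ≤ Fintype.card V := by
  rcases h with ⟨f, hfinj, -⟩ | ⟨-, f, hfinj, -⟩ <;>
    simpa using Fintype.card_le_of_injective f hfinj

lemma weak_rank {V : Type*} [Fintype V] {A : Matrix V V ℤ} {m : ℕ} {cyc : Bool} {c : V → Fin m}
    (hW : WeakProfile A m cyc c) (hc3 : cyc = true → 3 ≤ m)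
    (h5 : 5 ≤ pathRank (graphOf A)) : m = pathRank (graphOf A) ∧ 5 ≤ m := by
  have hbdd : BddAbove {n | HasChordless (graphOf A) n} :=
    ⟨Fintype.card V, fun nn hnn => hasChordless_card hnn⟩
  have hub : sSup {n | HasChordless (graphOf A) n} ≤ max 4 m :=
    csSup_le ⟨0, hasChordless_zero _⟩ (fun nn hnn => weak_bound hW hc3 hnn)
  unfold pathRank at h5 ⊢
  have h5m : 5 ≤ m := by
    have := le_trans h5 hub
    rcases le_max_iff.mp this with h | h <;> omega
  have hmem : m ≤ sSup {n | HasChordless (graphOf A) n} :=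
    le_csSup hbdd (weak_has hW h5m)
  have : max 4 m = m := max_eq_right (by omega)
  omega

lemma cast_inj_lt {k a b : ℕ} (ha : a < k) (hb : b < k)
    (h : (a : ZMod k) = (b : ZMod k)) : a = b := by
  haveI : NeZero k := ⟨by omega⟩
  have := congrArg ZMod.val h
  rwa [ZMod.val_natCast_of_lt ha, ZMod.val_natCast_of_lt hb] at this

lemma succ_zmod {k : ℕ} (hk : 0 < k) (a b : Fin k) :
    (((a:ℕ)+1) % k = (b:ℕ)) ↔ (((b:ℕ) : ZMod k) = ((a:ℕ) : ZMod k) + 1) := by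
  haveI : NeZero k := ⟨by omega⟩
  constructor
  · intro h
    have := congrArg (fun t : ℕ => (t : ZMod k)) h
    rw [ZMod.natCast_mod] at this
    push_cast at this
    exact this.symm
  · intro h
    apply cast_inj_lt (Nat.mod_lt _ hk) b.isLt
    rw [ZMod.natCast_mod]
    push_cast
    exact h.symm

lemma consec_zmod {k : ℕ} (hk : 0 < k) (x y : Fin k) :
    Consec true k x y ↔
      ((((y:ℕ)) : ZMod k) = (((x:ℕ)) : ZMod k) + 1 ∨
       (((x:ℕ)) : ZMod k) = (((y:ℕ)) : ZMod k) + 1) := by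
  rw [consecT, succ_zmod hk x y, succ_zmod hk y x]

lemma consec_split {k : ℕ} (cyc : Bool) (hk : 5 ≤ k) {a b : Fin k} (hab : a ≠ b) :
    ∃ t : Fin k, (t ≠ a ∧ t ≠ b ∧ Consec cyc k a t ∧ ¬ Consec cyc k b t) ∨
                 (t ≠ a ∧ t ≠ b ∧ Consec cyc k b t ∧ ¬ Consec cyc k a t) := by
  have hvab : (a:ℕ) ≠ (b:ℕ) := fun h => hab (Fin.ext h)
  have ha := a.isLt; have hb := b.isLt
  cases cyc with
  | false =>
    have aux : ∀ a b : Fin k, (a:ℕ) < (b:ℕ) →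
        ∃ t : Fin k, (t ≠ a ∧ t ≠ b ∧ Consec false k a t ∧ ¬ Consec false k b t) ∨
                     (t ≠ a ∧ t ≠ b ∧ Consec false k b t ∧ ¬ Consec false k a t) := by
      intro a b hlt
      have ha := a.isLt; have hb := b.isLt
      rcases Nat.eq_zero_or_pos (a:ℕ) with ha0 | hap
      · rcases Nat.lt_or_ge ((b:ℕ)+1) k with hblt | hbge
        · set t : Fin k := ⟨(b:ℕ)+1, hblt⟩ with htdef
          have htv : (t:ℕ) = (b:ℕ)+1 := rfl
          exact ⟨t, Or.inr ⟨Fin.ne_of_val_ne (by omega), Fin.ne_of_val_ne (by omega),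
            by rw [consecF]; omega, by rw [consecF]; omega⟩⟩
        · set t : Fin k := ⟨(b:ℕ)-1, by omega⟩ with htdef
          have htv : (t:ℕ) = (b:ℕ)-1 := rfl
          exact ⟨t, Or.inr ⟨Fin.ne_of_val_ne (by omega), Fin.ne_of_val_ne (by omega),
            by rw [consecF]; omega, by rw [consecF]; omega⟩⟩
      · set t : Fin k := ⟨(a:ℕ)-1, by omega⟩ with htdef
        have htv : (t:ℕ) = (a:ℕ)-1 := rfl
        exact ⟨t, Or.inl ⟨Fin.ne_of_val_ne (by omega), Fin.ne_of_val_ne (by omega),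
          by rw [consecF]; omega, by rw [consecF]; omega⟩⟩
    rcases Nat.lt_or_ge (a:ℕ) (b:ℕ) with h | h
    · exact aux a b h
    · obtain ⟨t, ht⟩ := aux b a (by omega)
      rcases ht with ⟨u1, u2, u3, u4⟩ | ⟨u1, u2, u3, u4⟩
      · exact ⟨t, Or.inr ⟨u2, u1, u3, u4⟩⟩
      · exact ⟨t, Or.inl ⟨u2, u1, u3, u4⟩⟩
  | true =>
    haveI : NeZero k := ⟨by omega⟩
    have hk0 : 0 < k := by omega
    have hnd : ∀ m : ℕ, 0 < m → m < k → ((m:ℕ) : ZMod k) ≠ 0 := by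
      intro m h1 h2 hz
      rw [ZMod.natCast_eq_zero_iff] at hz
      exact absurd (Nat.le_of_dvd h1 hz) (by omega)
    have h1z : ((1:ℕ) : ZMod k) ≠ 0 := hnd 1 (by omega) (by omega)
    have h2z : ((2:ℕ) : ZMod k) ≠ 0 := hnd 2 (by omega) (by omega)
    have h3z : ((3:ℕ) : ZMod k) ≠ 0 := hnd 3 (by omega) (by omega)
    have h4z : ((4:ℕ) : ZMod k) ≠ 0 := hnd 4 (by omega) (by omega)
    have h1z' : (1 : ZMod k) ≠ 0 := by exact_mod_cast h1z
    have h2z' : (2 : ZMod k) ≠ 0 := by exact_mod_cast h2z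
    have h3z' : (3 : ZMod k) ≠ 0 := by exact_mod_cast h3z
    have h4z' : (4 : ZMod k) ≠ 0 := by exact_mod_cast h4z
    have hZ : ((a:ℕ) : ZMod k) ≠ ((b:ℕ) : ZMod k) :=
      fun h => hvab (cast_inj_lt ha hb h)
    have zneq : ∀ t s : Fin k, ((t:ℕ) : ZMod k) ≠ ((s:ℕ) : ZMod k) → t ≠ s :=
      fun t s h hh => h (by rw [hh])
    by_cases hbad : ((b:ℕ) : ZMod k) = ((a:ℕ) : ZMod k) + 1 ∨
                    ((b:ℕ) : ZMod k) = ((a:ℕ) : ZMod k) + 2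
    · set t : Fin k := ⟨((b:ℕ)+1) % k, Nat.mod_lt _ hk0⟩ with htdef
      have htv : ((t:ℕ) : ZMod k) = ((b:ℕ) : ZMod k) + 1 := by
        show ((((b:ℕ)+1) % k : ℕ) : ZMod k) = _
        rw [ZMod.natCast_mod]; push_cast; ring
      refine ⟨t, Or.inr ⟨?_, ?_, ?_, ?_⟩⟩
      · apply zneq; rw [htv]; intro h
        rcases hbad with hb1 | hb1
        · exact h2z' (by linear_combination h - hb1)
        · exact h3z' (by linear_combination h - hb1)
      · apply zneq; rw [htv]; intro h
        exact h1z' (by linear_combination h)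
      · rw [consec_zmod hk0]; exact Or.inl htv
      · rw [consec_zmod hk0]
        rintro (h | h) <;> rw [htv] at h
        · exact hZ (by linear_combination -h)
        · rcases hbad with hb1 | hb1
          · exact h3z' (by linear_combination -h - hb1)
          · exact h4z' (by linear_combination -h - hb1)
    · set t : Fin k := ⟨((a:ℕ)+1) % k, Nat.mod_lt _ hk0⟩ with htdef
      have htv : ((t:ℕ) : ZMod k) = ((a:ℕ) : ZMod k) + 1 := by
        show ((((a:ℕ)+1) % k : ℕ) : ZMod k) = _
        rw [ZMod.natCast_mod]; push_cast; ring
      refine ⟨t, Or.inl ⟨?_, ?_, ?_, ?_⟩⟩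
      · apply zneq; rw [htv]; intro h
        exact h1z' (by linear_combination h)
      · apply zneq; rw [htv]; intro h
        exact hbad (Or.inl (by linear_combination -h))
      · rw [consec_zmod hk0]; exact Or.inl htv
      · rw [consec_zmod hk0]
        rintro (h | h) <;> rw [htv] at h
        · exact hZ (by linear_combination h)
        · exact hbad (Or.inr (by linear_combination h))

lemma same_col {V : Type*} {A : Matrix V V ℤ} {k₁ k₂ : ℕ} {cyc₁ cyc₂ : Bool}
    {c₁ : V → Fin k₁} {c₂ : V → Fin k₂}
    (h1 : WeakProfile A k₁ cyc₁ c₁) (h2 : WeakProfile A k₂ cyc₂ c₂)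
    (hk2 : 5 ≤ k₂) {u v : V} (h : c₁ u = c₁ v) : c₂ u = c₂ v := by
  rcases eq_or_ne u v with rfl | huv
  · rfl
  by_contra hcc
  have hchg : A u u = A v v := h1.2.1 u v h
  have hnbr : ∀ w, w ≠ u → w ≠ v → (A u w ≠ 0 ↔ A v w ≠ 0) := by
    intro w hwu hwv
    rw [h1.2.2 u w (Ne.symm hwu), h1.2.2 v w (Ne.symm hwv), h, hchg]
  rcases consec_split cyc₂ hk2 hcc with ⟨t, ⟨hta, htb, hcs, hncs⟩ | ⟨hta, htb, hcs, hncs⟩⟩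
  · obtain ⟨w, hw⟩ := h2.1 t
    have hwu : w ≠ u := fun hh => hta (by rw [← hw, hh])
    have hwv : w ≠ v := fun hh => htb (by rw [← hw, hh])
    have hAu : A u w ≠ 0 := (h2.2.2 u w (Ne.symm hwu)).2 (Or.inl (by rw [hw]; exact hcs))
    have hAv : A v w = 0 := by
      by_contra hAv
      rcases (h2.2.2 v w (Ne.symm hwv)).1 hAv with hcs2 | ⟨hEq, -⟩
      · rw [hw] at hcs2; exact hncs hcs2
      · rw [hw] at hEq; exact htb hEq.symm
    exact ((hnbr w hwu hwv).1 hAu) hAv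
  · obtain ⟨w, hw⟩ := h2.1 t
    have hwu : w ≠ u := fun hh => hta (by rw [← hw, hh])
    have hwv : w ≠ v := fun hh => htb (by rw [← hw, hh])
    have hAv : A v w ≠ 0 := (h2.2.2 v w (Ne.symm hwv)).2 (Or.inl (by rw [hw]; exact hcs))
    have hAu : A u w = 0 := by
      by_contra hAu
      rcases (h2.2.2 u w (Ne.symm hwu)).1 hAu with hcs2 | ⟨hEq, -⟩
      · rw [hw] at hcs2; exact hncs hcs2
      · rw [hw] at hEq; exact hta hEq.symm
    exact ((hnbr w hwu hwv).2 hAv) hAu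

lemma zmod_small_ne {k m : ℕ} (h1 : 0 < m) (h2 : m < k) : ((m:ℕ) : ZMod k) ≠ 0 := by
  intro hz
  rw [ZMod.natCast_eq_zero_iff] at hz
  exact absurd (Nat.le_of_dvd h1 hz) (by omega)

lemma no_mix {k : ℕ} (hk : 5 ≤ k) (φ : Fin k → Fin k) (hinj : Function.Injective φ)
    (hsurj : Function.Surjective φ)
    (hφ : ∀ x y, x ≠ y → (Consec false k x y ↔ Consec true k (φ x) (φ y))) : False := by
  haveI : NeZero k := ⟨by omega⟩
  have hk0 : 0 < k := by omega
  have h1z : (1 : ZMod k) ≠ 0 := by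
    have := zmod_small_ne (k := k) (m := 1) (by omega) (by omega); exact_mod_cast this
  have h2z : (2 : ZMod k) ≠ 0 := by
    have := zmod_small_ne (k := k) (m := 2) (by omega) (by omega); exact_mod_cast this
  set z : Fin k := ⟨0, hk0⟩ with hz
  set p := φ z with hp
  set q1 : Fin k := ⟨((p:ℕ)+1) % k, Nat.mod_lt _ hk0⟩ with hq1def
  set q2 : Fin k := ⟨((p:ℕ)+(k-1)) % k, Nat.mod_lt _ hk0⟩ with hq2def
  have hzq1 : ((q1:ℕ) : ZMod k) = ((p:ℕ) : ZMod k) + 1 := by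
    show ((((p:ℕ)+1) % k : ℕ) : ZMod k) = _
    rw [ZMod.natCast_mod]; push_cast; ring
  have hzq2 : ((q2:ℕ) : ZMod k) = ((p:ℕ) : ZMod k) - 1 := by
    show ((((p:ℕ)+(k-1)) % k : ℕ) : ZMod k) = _
    rw [ZMod.natCast_mod, Nat.cast_add, Nat.cast_sub (by omega : 1 ≤ k), ZMod.natCast_self]
    ring
  have hne12 : q1 ≠ q2 := by
    intro h
    apply h2z
    have : ((q1:ℕ) : ZMod k) = ((q2:ℕ) : ZMod k) := by rw [h]
    rw [hzq1, hzq2] at this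
    linear_combination this
  have hq1p : q1 ≠ p := by
    intro h
    apply h1z
    have : ((q1:ℕ) : ZMod k) = ((p:ℕ) : ZMod k) := by rw [h]
    rw [hzq1] at this
    linear_combination this
  have hq2p : q2 ≠ p := by
    intro h
    apply h1z
    have : ((q2:ℕ) : ZMod k) = ((p:ℕ) : ZMod k) := by rw [h]
    rw [hzq2] at this
    linear_combination -this
  obtain ⟨y1, hy1⟩ := hsurj q1
  obtain ⟨y2, hy2⟩ := hsurj q2
  have hzy1 : z ≠ y1 := fun h => hq1p (by rw [← hy1, ← h, ← hp])
  have hzy2 : z ≠ y2 := fun h => hq2p (by rw [← hy2, ← h, ← hp])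
  have hcs1 : Consec true k (φ z) (φ y1) := by
    rw [hy1, consec_zmod hk0, ← hp]
    exact Or.inl hzq1
  have hcs2 : Consec true k (φ z) (φ y2) := by
    rw [hy2, consec_zmod hk0, ← hp]
    right
    rw [hzq2]; ring
  have h0v : ((z : Fin k) : ℕ) = 0 := rfl
  have hy1v : (y1:ℕ) = 1 := by
    have := (hφ z y1 hzy1).2 hcs1
    rw [consecF] at this
    omega
  have hy2v : (y2:ℕ) = 1 := by
    have := (hφ z y2 hzy2).2 hcs2
    rw [consecF] at this
    omega
  have : y1 = y2 := Fin.ext (by omega)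
  rw [this, hy2] at hy1
  exact hne12 hy1.symm

lemma path_classify {k : ℕ} (hk : 5 ≤ k) (φ : Fin k → Fin k) (hinj : Function.Injective φ)
    (hsurj : Function.Surjective φ)
    (hφ : ∀ x y, x ≠ y → (Consec false k x y ↔ Consec false k (φ x) (φ y))) :
    (∀ x, ((φ x):ℕ) = (x:ℕ)) ∨ (∀ x, ((φ x):ℕ) = k - 1 - (x:ℕ)) := by
  have hk0 : 0 < k := by omega
  set z : Fin k := ⟨0, hk0⟩ with hz
  have h0v : ((z : Fin k) : ℕ) = 0 := rfl
  have hend : ((φ z):ℕ) = 0 ∨ ((φ z):ℕ) = k - 1 := by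
    by_contra hcon
    push_neg at hcon
    obtain ⟨hp1, hp2⟩ := hcon
    have hpl := (φ z).isLt
    obtain ⟨y1, hy1⟩ := hsurj ⟨((φ z):ℕ)-1, by omega⟩
    obtain ⟨y2, hy2⟩ := hsurj ⟨((φ z):ℕ)+1, by omega⟩
    have hy1v : ((φ y1):ℕ) = ((φ z):ℕ)-1 := by rw [hy1]
    have hy2v : ((φ y2):ℕ) = ((φ z):ℕ)+1 := by rw [hy2]
    have hzy1 : z ≠ y1 := fun h => by rw [← h] at hy1v; omega
    have hzy2 : z ≠ y2 := fun h => by rw [← h] at hy2v; omega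
    have hc1 : (y1:ℕ) = 1 := by
      have := (hφ z y1 hzy1).2 (by rw [consecF]; omega)
      rw [consecF] at this; omega
    have hc2 : (y2:ℕ) = 1 := by
      have := (hφ z y2 hzy2).2 (by rw [consecF]; omega)
      rw [consecF] at this; omega
    have : y1 = y2 := Fin.ext (by omega)
    rw [this] at hy1v
    omega
  rcases hend with h0 | h0
  · left
    have key : ∀ j, ∀ (h : j < k), ((φ ⟨j, h⟩):ℕ) = j := by
      intro j
      induction j using Nat.strong_induction_on with
      | _ j ih =>
        intro h
        match j, h with
        | 0, h => exact h0
        | (j'+1), h =>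
          have hj'k : j' < k := by omega
          have hprev : ((φ ⟨j', hj'k⟩):ℕ) = j' := ih j' (by omega) hj'k
          have hne : (⟨j', hj'k⟩ : Fin k) ≠ ⟨j'+1, h⟩ :=
            Fin.ne_of_val_ne (show j' ≠ j' + 1 by omega)
          have hcs := (hφ _ _ hne).1 (by rw [consecF]; exact Or.inl rfl)
          rw [consecF, hprev] at hcs
          rcases hcs with hcs | hcs
          · omega
          · exfalso
            rcases Nat.eq_zero_or_pos j' with hj0 | hjp
            · omega
            · have hj2k : j' - 1 < k := by omega
              have hpp : ((φ ⟨j'-1, hj2k⟩):ℕ) = j'-1 := ih (j'-1) (by omega) hj2k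
              have : φ ⟨j'-1, hj2k⟩ = φ ⟨j'+1, h⟩ := Fin.ext (by omega)
              have := hinj this
              have := congrArg Fin.val this
              simp only [] at this
              omega
    intro x
    exact key x.1 x.2
  · right
    have key : ∀ j, ∀ (h : j < k), ((φ ⟨j, h⟩):ℕ) = k - 1 - j := by
      intro j
      induction j using Nat.strong_induction_on with
      | _ j ih =>
        intro h
        match j, h with
        | 0, h => rw [h0]; omega
        | (j'+1), h =>
          have hj'k : j' < k := by omega
          have hprev : ((φ ⟨j', hj'k⟩):ℕ) = k - 1 - j' := ih j' (by omega) hj'k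
          have hne : (⟨j', hj'k⟩ : Fin k) ≠ ⟨j'+1, h⟩ :=
            Fin.ne_of_val_ne (show j' ≠ j' + 1 by omega)
          have hcs := (hφ _ _ hne).1 (by rw [consecF]; exact Or.inl rfl)
          rw [consecF, hprev] at hcs
          have hvlt := (φ ⟨j'+1, h⟩).isLt
          rcases hcs with hcs | hcs
          · exfalso
            rcases Nat.eq_zero_or_pos j' with hj0 | hjp
            · omega
            · have hj2k : j' - 1 < k := by omega
              have hpp : ((φ ⟨j'-1, hj2k⟩):ℕ) = k - 1 - (j'-1) := ih (j'-1) (by omega) hj2k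
              have : φ ⟨j'-1, hj2k⟩ = φ ⟨j'+1, h⟩ := Fin.ext (by omega)
              have := hinj this
              have := congrArg Fin.val this
              simp only [] at this
              omega
          · omega
    intro x
    exact key x.1 x.2

lemma cycle_classify {k : ℕ} (hk : 5 ≤ k) (φ : Fin k → Fin k) (hinj : Function.Injective φ)
    (hφ : ∀ x y, x ≠ y → (Consec true k x y ↔ Consec true k (φ x) (φ y))) :
    ∃ t : ℕ, (∀ x, ((φ x):ℕ) = ((x:ℕ) + t) % k) ∨
             (∀ x, ((φ x):ℕ) = ((k - 1 - (x:ℕ)) + t) % k) := by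
  haveI : NeZero k := ⟨by omega⟩
  have hk0 : 0 < k := by omega
  have h2z : (2 : ZMod k) ≠ 0 := by
    have := zmod_small_ne (k := k) (m := 2) (by omega) (by omega); exact_mod_cast this
  set Z : Fin k → ZMod k := fun x => ((x:ℕ) : ZMod k) with hZdef
  have Zinj : ∀ a b : Fin k, Z a = Z b → a = b :=
    fun a b h => Fin.ext (cast_inj_lt a.isLt b.isLt h)
  have hstep : ∀ x y : Fin k, (y:ℕ) = (x:ℕ) + 1 →
      (Z (φ y) = Z (φ x) + 1 ∨ Z (φ y) = Z (φ x) - 1) := by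
    intro x y hyx
    have hne : x ≠ y := Fin.ne_of_val_ne (by omega)
    have hcs : Consec true k x y := by
      rw [consecT]
      left
      have : (x:ℕ) + 1 < k := by have := y.isLt; omega
      rw [Nat.mod_eq_of_lt this]; omega
    have := (hφ x y hne).1 hcs
    rw [consec_zmod hk0] at this
    rcases this with h | h
    · exact Or.inl h
    · right; linear_combination -h
  set z : Fin k := ⟨0, hk0⟩ with hz
  have hone : (⟨1, by omega⟩ : Fin k) = ⟨1, by omega⟩ := rfl
  have hd := hstep z ⟨1, by omega⟩ rfl
  rcases hd with hd | hd
  · -- rotation case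
    have key : ∀ j, ∀ (h : j < k), Z (φ ⟨j, h⟩) = Z (φ z) + (j : ZMod k) := by
      intro j
      induction j using Nat.strong_induction_on with
      | _ j ih =>
        intro h
        match j, h with
        | 0, h => rw [show (⟨0, h⟩ : Fin k) = z from rfl]; simp
        | (j'+1), h =>
          have hj'k : j' < k := by omega
          have hprev := ih j' (by omega) hj'k
          have hs := hstep ⟨j', hj'k⟩ ⟨j'+1, h⟩ rfl
          rcases hs with hs | hs
          · rw [hs, hprev]; push_cast; ring
          · exfalso
            rcases Nat.eq_zero_or_pos j' with hj0 | hjp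
            · subst hj0
              apply h2z
              have hz1 : Z (φ ⟨0+1, h⟩) = Z (φ z) + 1 := hd
              rw [hz1] at hs
              have hpz : Z (φ ⟨0, hj'k⟩) = Z (φ z) := by rfl
              rw [hpz] at hs
              linear_combination hs
            · have hj2k : j' - 1 < k := by omega
              have hpp := ih (j'-1) (by omega) hj2k
              have heq : Z (φ ⟨j'-1, hj2k⟩) = Z (φ ⟨j'+1, h⟩) := by
                rw [hpp, hs, hprev]
                have hsub : ((j'-1 : ℕ) : ZMod k) = ((j' : ℕ) : ZMod k) - 1 :=
                  by rw [Nat.cast_sub (by omega : 1 ≤ j')]; push_cast; ring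
                rw [hsub]; ring
              have := hinj (Zinj _ _ heq)
              have := congrArg Fin.val this
              simp only [] at this
              omega
    refine ⟨((φ z):ℕ), Or.inl ?_⟩
    intro x
    have hc := key x.1 x.2
    have hcast : Z (φ x) = (((x:ℕ) + ((φ z):ℕ) : ℕ) : ZMod k) := by
      have : Z (φ x) = Z (φ z) + ((x:ℕ) : ZMod k) := by
        have : (⟨x.1, x.2⟩ : Fin k) = x := rfl
        rw [← this]; exact hc
      rw [this]; push_cast; ring
    have := congrArg ZMod.val hcast
    rwa [show Z (φ x) = (((φ x):ℕ) : ZMod k) from rfl, ZMod.val_natCast_of_lt (φ x).isLt,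
      ZMod.val_natCast] at this
  · -- reflection case
    have key : ∀ j, ∀ (h : j < k), Z (φ ⟨j, h⟩) = Z (φ z) - (j : ZMod k) := by
      intro j
      induction j using Nat.strong_induction_on with
      | _ j ih =>
        intro h
        match j, h with
        | 0, h => rw [show (⟨0, h⟩ : Fin k) = z from rfl]; simp
        | (j'+1), h =>
          have hj'k : j' < k := by omega
          have hprev := ih j' (by omega) hj'k
          have hs := hstep ⟨j', hj'k⟩ ⟨j'+1, h⟩ rfl
          rcases hs with hs | hs
          · exfalso
            rcases Nat.eq_zero_or_pos j' with hj0 | hjp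
            · subst hj0
              apply h2z
              have hz1 : Z (φ ⟨0+1, h⟩) = Z (φ z) - 1 := hd
              rw [hz1] at hs
              have hpz : Z (φ ⟨0, hj'k⟩) = Z (φ z) := by rfl
              rw [hpz] at hs
              linear_combination -hs
            · have hj2k : j' - 1 < k := by omega
              have hpp := ih (j'-1) (by omega) hj2k
              have heq : Z (φ ⟨j'-1, hj2k⟩) = Z (φ ⟨j'+1, h⟩) := by
                rw [hpp, hs, hprev]
                have hsub : ((j'-1 : ℕ) : ZMod k) = ((j' : ℕ) : ZMod k) - 1 :=
                  by rw [Nat.cast_sub (by omega : 1 ≤ j')]; push_cast; ring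
                rw [hsub]; ring
              have := hinj (Zinj _ _ heq)
              have := congrArg Fin.val this
              simp only [] at this
              omega
          · rw [hs, hprev]; push_cast; ring
    refine ⟨((φ z):ℕ) + 1, Or.inr ?_⟩
    intro x
    have hc := key x.1 x.2
    have hxle : (x:ℕ) ≤ k - 1 := by have := x.isLt; omega
    have hcast : Z (φ x) = (((k - 1 - (x:ℕ)) + (((φ z):ℕ) + 1) : ℕ) : ZMod k) := by
      have h1 : Z (φ x) = Z (φ z) - ((x:ℕ) : ZMod k) := by
        have : (⟨x.1, x.2⟩ : Fin k) = x := rfl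
        rw [← this]; exact hc
      rw [h1, Nat.cast_add, Nat.cast_sub hxle, Nat.cast_sub (by omega : 1 ≤ k),
        ZMod.natCast_self]
      push_cast
      ring
    have := congrArg ZMod.val hcast
    rwa [show Z (φ x) = (((φ x):ℕ) : ZMod k) from rfl, ZMod.val_natCast_of_lt (φ x).isLt,
      ZMod.val_natCast] at this

lemma order_classify {k : ℕ} (hk : 5 ≤ k) (cyc₁ cyc₂ : Bool) (φ : Fin k → Fin k)
    (hinj : Function.Injective φ) (hsurj : Function.Surjective φ)
    (hφ : ∀ x y, x ≠ y → (Consec cyc₁ k x y ↔ Consec cyc₂ k (φ x) (φ y))) :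
    ∃ t : ℕ, (cyc₁ = true ∨ t % k = 0) ∧
      ((∀ x : Fin k, ((φ x):ℕ) = ((x:ℕ) + t) % k) ∨
       (∀ x : Fin k, ((φ x):ℕ) = ((k - 1 - (x:ℕ)) + t) % k)) := by
  cases cyc₁ with
  | false =>
    cases cyc₂ with
    | false =>
      rcases path_classify hk φ hinj hsurj hφ with h | h
      · refine ⟨0, Or.inr (Nat.zero_mod k), Or.inl fun x => ?_⟩
        rw [h x, Nat.add_zero, Nat.mod_eq_of_lt x.isLt]
      · refine ⟨0, Or.inr (Nat.zero_mod k), Or.inr fun x => ?_⟩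
        rw [h x, Nat.add_zero, Nat.mod_eq_of_lt (by omega : k - 1 - (x:ℕ) < k)]
    | true => exact (no_mix hk φ hinj hsurj hφ).elim
  | true =>
    cases cyc₂ with
    | false =>
      exfalso
      set e := Equiv.ofBijective φ ⟨hinj, hsurj⟩ with he
      apply no_mix hk e.symm e.symm.injective e.symm.surjective
      intro x y hxy
      have h1 : e.symm x ≠ e.symm y := fun h => hxy (by simpa using congrArg e h)
      have h2 := hφ (e.symm x) (e.symm y) h1
      have hex : φ (e.symm x) = x := e.apply_symm_apply x
      have hey : φ (e.symm y) = y := e.apply_symm_apply y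
      rw [hex, hey] at h2
      exact h2.symm
    | true =>
      obtain ⟨t, ht⟩ := cycle_classify hk φ hinj hφ
      exact ⟨t, Or.inl rfl, ht⟩

lemma sum_sq_eq_one {ι : Type*} [Fintype ι] [DecidableEq ι] (f : ι → ℤ)
    (h : ∑ i, f i * f i = 1) :
    ∃ i, (f i = 1 ∨ f i = -1) ∧ ∀ j, j ≠ i → f j = 0 := by
  have hnn : ∀ i ∈ Finset.univ, (0:ℤ) ≤ f i * f i := fun i _ => mul_self_nonneg _
  have hex : ∃ i, f i ≠ 0 := by
    by_contra hc
    push_neg at hc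
    rw [Finset.sum_eq_zero (fun i _ => by rw [hc i]; ring)] at h
    omega
  obtain ⟨i, hi⟩ := hex
  have h1le : 1 ≤ f i * f i := by
    have hpos : 0 < f i * f i := by
      rcases hi.lt_or_gt with h' | h'
      · exact mul_pos_of_neg_of_neg h' h'
      · exact mul_pos h' h'
    omega
  have hle : f i * f i ≤ 1 := by
    rw [← h]
    exact Finset.single_le_sum hnn (Finset.mem_univ i)
  have hfi : f i = 1 ∨ f i = -1 :=
    Int.isUnit_iff.mp (IsUnit.of_mul_eq_one (f i) (le_antisymm hle h1le))
  refine ⟨i, hfi, fun j hj => ?_⟩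
  by_contra hfj
  have h1lej : 1 ≤ f j * f j := by
    have hpos : 0 < f j * f j := by
      rcases (Ne.lt_or_gt hfj) with h' | h'
      · exact mul_pos_of_neg_of_neg h' h'
      · exact mul_pos h' h'
    omega
  have hpair : ∑ l ∈ ({i, j} : Finset ι), f l * f l = f i * f i + f j * f j :=
    Finset.sum_pair (Ne.symm hj)
  have hmono := Finset.sum_le_sum_of_subset_of_nonneg
    (Finset.subset_univ ({i, j} : Finset ι)) (fun l _ _ => mul_self_nonneg (f l))
  rw [hpair] at hmono
  omega

lemma mequiv_transfer {V W : Type*} [Fintype V] [DecidableEq V] [Fintype W] [DecidableEq W]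
    {A : Matrix V V ℤ} {B : Matrix W W ℤ} (h : MEquiv A B) :
    ∃ (e : W ≃ V) (ε : ℤ), (ε = 1 ∨ ε = -1) ∧
      (∀ x y : W, B x y = 0 ↔ A (e x) (e y) = 0) ∧
      (∀ x : W, B x x = ε * A (e x) (e x)) := by
  obtain ⟨ε, P, hε, hPtP, hPPt, hB⟩ := h
  have hcol : ∀ w : W, ∃ v : V, (P v w = 1 ∨ P v w = -1) ∧ ∀ v', v' ≠ v → P v' w = 0 := by
    intro w
    apply sum_sq_eq_one
    have h1 : (Pᵀ * P) w w = (1 : Matrix W W ℤ) w w := by rw [hPtP]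
    rw [Matrix.mul_apply, Matrix.one_apply_eq] at h1
    simpa [Matrix.transpose_apply] using h1
  choose F hF1 hF2 using hcol
  have hFinj : Function.Injective F := by
    intro w w' hww
    by_contra hne
    have h0 : (Pᵀ * P) w w' = 0 := by rw [hPtP]; exact Matrix.one_apply_ne hne
    rw [Matrix.mul_apply] at h0
    have hsingle : ∑ v, Pᵀ w v * P v w' = P (F w) w * P (F w) w' := by
      rw [Finset.sum_eq_single (F w)]
      · rw [Matrix.transpose_apply]
      · intro v _ hv
        rw [Matrix.transpose_apply, hF2 w v hv, zero_mul]
      · intro hmem; exact absurd (Finset.mem_univ _) hmem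
    rw [hsingle] at h0
    have hw' := hF1 w'
    rw [← hww] at hw'
    rcases hF1 w with h' | h' <;> rcases hw' with h'' | h'' <;>
      rw [h', h''] at h0 <;> norm_num at h0
  have hFsurj : Function.Surjective F := by
    intro v
    have h1 : (P * Pᵀ) v v = (1 : Matrix V V ℤ) v v := by rw [hPPt]
    rw [Matrix.mul_apply, Matrix.one_apply_eq] at h1
    have hex : ∃ w, P v w ≠ 0 := by
      by_contra hc
      push_neg at hc
      rw [Finset.sum_eq_zero (fun w _ => by rw [Matrix.transpose_apply, hc w]; ring)] at h1
      omega
    obtain ⟨w, hw⟩ := hex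
    refine ⟨w, ?_⟩
    by_contra hne
    exact hw (hF2 w v (fun hh => hne hh.symm))
  have hBA : ∀ x y : W, B x y = ε * (P (F x) x * A (F x) (F y) * P (F y) y) := by
    intro x y
    rw [hB]
    simp only [Matrix.smul_apply, smul_eq_mul]
    congr 1
    have h2 : (Pᵀ * A) x (F y) = P (F x) x * A (F x) (F y) := by
      rw [Matrix.mul_apply, Finset.sum_eq_single (F x)]
      · rw [Matrix.transpose_apply]
      · intro v _ hv; rw [Matrix.transpose_apply, hF2 x v hv, zero_mul]
      · intro hmem; exact absurd (Finset.mem_univ _) hmem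
    rw [Matrix.mul_apply, Finset.sum_eq_single (F y)]
    · rw [h2]
    · intro v _ hv; rw [hF2 y v hv, mul_zero]
    · intro hmem; exact absurd (Finset.mem_univ _) hmem
  refine ⟨Equiv.ofBijective F ⟨hFinj, hFsurj⟩, ε, hε, ?_, ?_⟩
  · intro x y
    show B x y = 0 ↔ A (F x) (F y) = 0
    rw [hBA x y]
    have hεne : ε ≠ 0 := by rcases hε with h'|h' <;> simp [h']
    have hxne : P (F x) x ≠ 0 := by rcases hF1 x with h'|h' <;> simp [h']
    have hyne : P (F y) y ≠ 0 := by rcases hF1 y with h'|h' <;> simp [h']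
    simp [mul_eq_zero, hεne, hxne, hyne]
  · intro x
    show B x x = ε * A (F x) (F x)
    rw [hBA x x]
    rcases hF1 x with h' | h' <;> rw [h'] <;> ring

lemma weak_transfer {V W : Type*} [Fintype V] [DecidableEq V] [Fintype W] [DecidableEq W]
    {A : Matrix V V ℤ} {B : Matrix W W ℤ} (h : MEquiv A B) {m : ℕ} {cyc : Bool} {c : W → Fin m}
    (hW : WeakProfile B m cyc c) : ∃ c' : V → Fin m, WeakProfile A m cyc c' := by
  obtain ⟨e, ε, hε, hzero, hdiag⟩ := mequiv_transfer h
  refine ⟨fun v => c (e.symm v), ?_, ?_, ?_⟩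
  · intro t
    obtain ⟨w, hw⟩ := hW.1 t
    exact ⟨e w, by simp [hw]⟩
  · intro u v hc
    have hBd := hW.2.1 _ _ hc
    have h1 := hdiag (e.symm u)
    have h2 := hdiag (e.symm v)
    rw [e.apply_symm_apply] at h1 h2
    have hmul : ε * A u u = ε * A v v := by rw [← h1, ← h2, hBd]
    rcases hε with h' | h' <;> rw [h'] at hmul <;> linarith
  · intro u v huv
    have hxy : e.symm u ≠ e.symm v := fun hh => huv (by simpa using congrArg e hh)
    have hadj := hW.2.2 _ _ hxy
    have hz := hzero (e.symm u) (e.symm v)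
    rw [e.apply_symm_apply, e.apply_symm_apply] at hz
    have hzd := hdiag (e.symm u)
    rw [e.apply_symm_apply] at hzd
    constructor
    · intro hA
      have hB0 : B (e.symm u) (e.symm v) ≠ 0 := fun h0 => hA (hz.mp h0)
      rcases hadj.mp hB0 with hcs | ⟨hEq, hBne⟩
      · exact Or.inl hcs
      · refine Or.inr ⟨hEq, ?_⟩
        intro hA0
        apply hBne
        rw [hzd, hA0, mul_zero]
    · intro hR hA0
      have hB0 : B (e.symm u) (e.symm v) = 0 := hz.mpr hA0
      rcases hR with hcs | ⟨hEq, hAne⟩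
      · exact (hadj.mpr (Or.inl hcs)) hB0
      · have hBd : B (e.symm u) (e.symm u) ≠ 0 := by
          rw [hzd]
          rcases hε with h'|h' <;> rw [h'] <;> simpa using hAne
        exact (hadj.mpr (Or.inr ⟨hEq, hBd⟩)) hB0

lemma not_both_mod {k u v : ℕ} (hk : 3 ≤ k) (hu : u < k)
    (h1 : (u+1) % k = v) (h2 : (v+1) % k = u) : False := by
  have e1 : (u + 2) % k = u % k := by
    have e2 : ((u+1) % k + 1) % k = (u + 1 + 1) % k := Nat.mod_add_mod (u+1) k 1
    rw [h1, h2] at e2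
    rw [show u + 2 = u + 1 + 1 from rfl, ← e2, Nat.mod_eq_of_lt hu]
  have hmod : Nat.ModEq k u (u + 2) := e1.symm
  have := (Nat.modEq_iff_dvd' (by omega : u ≤ u + 2)).mp hmod
  have := Nat.le_of_dvd (by omega) this
  omega

lemma TmatNe {k : ℕ} (hk : 3 ≤ k) (u v : Fin k × Fin 2) :
    Tmat k u v ≠ 0 ↔ (((u.1:ℕ)+1) % k = (v.1:ℕ) ∨ ((v.1:ℕ)+1) % k = (u.1:ℕ)) := by
  have hnb : ¬(((((u.1:ℕ)+1) % k = (v.1:ℕ))) ∧ ((((v.1:ℕ)+1) % k = (u.1:ℕ)))) := by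
    rintro ⟨h1, h2⟩; exact not_both_mod hk u.1.isLt h1 h2
  simp only [Tmat, Matrix.of_apply]
  by_cases h1 : ((u.1:ℕ)+1) % k = (v.1:ℕ)
  · have h2 : ¬(((v.1:ℕ)+1) % k = (u.1:ℕ)) := fun h2 => hnb ⟨h1, h2⟩
    rw [if_pos h1, if_neg h2, add_zero]
    constructor
    · intro _; exact Or.inl h1
    · intro _; split_ifs <;> norm_num
  · rw [if_neg h1]
    by_cases h2 : ((v.1:ℕ)+1) % k = (u.1:ℕ)
    · rw [if_pos h2, zero_add]
      constructor
      · intro _; exact Or.inr h2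
      · intro _; split_ifs <;> norm_num
    · rw [if_neg h2, add_zero]
      constructor
      · intro hh; exact absurd rfl hh
      · rintro (h | h)
        · exact absurd h h1
        · exact absurd h h2

lemma Tmat_diag {k : ℕ} (hk : 3 ≤ k) (u : Fin k × Fin 2) : Tmat k u u = 0 := by
  by_contra hne
  rcases (TmatNe hk u u).mp hne with h | h <;>
  · have := u.1.isLt
    rw [smod this] at h
    omega

lemma walk_ivt {W : Type*} {G : SimpleGraph W} (n : W → ℕ)
    (hstep : ∀ x y : W, G.Adj x y → n x ≤ n y + 1 ∧ n y ≤ n x + 1) :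
    ∀ (x y : W), G.Reachable x y → ∀ t : ℕ,
      ((n x ≤ t ∧ t ≤ n y) ∨ (n y ≤ t ∧ t ≤ n x)) → ∃ z, n z = t := by
  intro x y hr
  obtain ⟨w⟩ := hr
  induction w with
  | @nil a => intro t ht; exact ⟨a, by omega⟩
  | @cons a b cc hadj p ih =>
    intro t ht
    by_cases hb : (n b ≤ t ∧ t ≤ n cc) ∨ (n cc ≤ t ∧ t ≤ n b)
    · exact ih t hb
    · refine ⟨a, ?_⟩
      have hs := hstep a b hadj
      omega

lemma nchar {k c G : ℕ} (hk : 1 ≤ k) (hc : c < k) (hG : G < k) :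
    ((c + k - 1 - G) % k = c - G - 1 ∧ G < c) ∨
    ((c + k - 1 - G) % k = c + k - 1 - G ∧ c ≤ G) := by
  rcases Nat.lt_or_ge G c with h | h
  · left
    refine ⟨?_, h⟩
    have he : c + k - 1 - G = (c - G - 1) + k := by omega
    rw [he, Nat.add_mod_right, Nat.mod_eq_of_lt (by omega)]
  · right
    refine ⟨?_, h⟩
    exact Nat.mod_eq_of_lt (by omega)

lemma weak_of_T {k : ℕ} (hk : 3 ≤ k) (S : Finset (Fin k × Fin 2))
    (hconn : Indecomposable (induce (Tmat k) S)) :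
    ∃ (m : ℕ) (cyc : Bool) (c : {x // x ∈ S} → Fin m),
      (cyc = true → 3 ≤ m) ∧ WeakProfile (induce (Tmat k) S) m cyc c := by
  haveI hne : Nonempty {x // x ∈ S} := hconn.nonempty
  have hBapp : ∀ x y : {x // x ∈ S}, induce (Tmat k) S x y = Tmat k x.1 y.1 := fun x y => rfl
  have hdiag : ∀ x : {x // x ∈ S}, induce (Tmat k) S x x = 0 := fun x => Tmat_diag hk x.1
  by_cases hfull : ∀ col : Fin k, ∃ x : {x // x ∈ S}, x.1.1 = col
  · refine ⟨k, true, fun x => x.1.1, fun _ => hk, ?_, ?_, ?_⟩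
    · intro col; obtain ⟨x, hx⟩ := hfull col; exact ⟨x, hx⟩
    · intro u v _; rw [hdiag u, hdiag v]
    · intro u v huv
      rw [hBapp, TmatNe hk]
      constructor
      · intro h
        left
        rw [consecT]
        exact h
      · rintro (h | ⟨hEq, hA⟩)
        · rw [consecT] at h
          exact h
        · exact absurd (hdiag u) hA
  · push_neg at hfull
    obtain ⟨g, hg⟩ := hfull
    set n : {x // x ∈ S} → ℕ := fun x => ((x.1.1:ℕ) + k - 1 - (g:ℕ)) % k with hn
    have hgne : ∀ x : {x // x ∈ S}, (x.1.1:ℕ) ≠ (g:ℕ) := fun x h => hg x (Fin.ext h)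
    have hchar : ∀ x : {x // x ∈ S},
        ((n x = (x.1.1:ℕ) - (g:ℕ) - 1 ∧ (g:ℕ) < (x.1.1:ℕ)) ∨
         (n x = (x.1.1:ℕ) + k - 1 - (g:ℕ) ∧ (x.1.1:ℕ) ≤ (g:ℕ))) :=
      fun x => nchar (by omega) x.1.1.isLt g.isLt
    have hnlt : ∀ x, n x < k := fun x => Nat.mod_lt _ (by omega)
    have hnne : ∀ x, n x ≠ k - 1 := by
      intro x
      have h1 := hgne x
      have h2 := x.1.1.isLt
      have h3 := g.isLt
      rcases hchar x with ⟨h4, h5⟩ | ⟨h4, h5⟩ <;> omega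
    have hcons : ∀ x y : {x // x ∈ S}, (((x.1.1:ℕ)+1) % k = (y.1.1:ℕ)) ↔ n y = n x + 1 := by
      intro x y
      have hx := x.1.1.isLt
      have hy := y.1.1.isLt
      have hgx := hgne x
      have hgy := hgne y
      have hgk := g.isLt
      rw [smod hx]
      rcases hchar x with ⟨h1, h2⟩ | ⟨h1, h2⟩ <;> rcases hchar y with ⟨h3, h4⟩ | ⟨h3, h4⟩ <;>
        omega
    have hadjstep : ∀ x y : {x // x ∈ S},
        (graphOf (induce (Tmat k) S)).Adj x y → n x ≤ n y + 1 ∧ n y ≤ n x + 1 := by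
      intro x y hadj
      rw [graphOf, SimpleGraph.fromRel_adj] at hadj
      obtain ⟨hxy, h1 | h1⟩ := hadj <;> rw [hBapp, TmatNe hk] at h1 <;>
        rcases h1 with h1 | h1
      · rw [hcons x y] at h1; omega
      · rw [hcons y x] at h1; omega
      · rw [hcons y x] at h1; omega
      · rw [hcons x y] at h1; omega
    obtain ⟨x₀⟩ := hne
    have hTne : (Finset.image n Finset.univ).Nonempty :=
      ⟨n x₀, Finset.mem_image_of_mem _ (Finset.mem_univ _)⟩
    set lo := (Finset.image n Finset.univ).min' hTne with hlodef
    set hi := (Finset.image n Finset.univ).max' hTne with hhidef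
    have hlo : ∀ x, lo ≤ n x :=
      fun x => Finset.min'_le _ _ (Finset.mem_image_of_mem _ (Finset.mem_univ _))
    have hhi : ∀ x, n x ≤ hi :=
      fun x => Finset.le_max' _ _ (Finset.mem_image_of_mem _ (Finset.mem_univ _))
    obtain ⟨xlo, -, hxlo⟩ := Finset.mem_image.mp ((Finset.image n Finset.univ).min'_mem hTne)
    obtain ⟨xhi, -, hxhi⟩ := Finset.mem_image.mp ((Finset.image n Finset.univ).max'_mem hTne)
    have hsurj : ∀ t, lo ≤ t → t ≤ hi → ∃ z, n z = t := by
      intro t h1 h2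
      refine walk_ivt n hadjstep xlo xhi (hconn.preconnected xlo xhi) t (Or.inl ⟨?_, ?_⟩)
      · rw [hxlo]; exact h1
      · rw [hxhi]; exact h2
    have hloh : lo ≤ hi := le_trans (hlo x₀) (hhi x₀)
    refine ⟨hi - lo + 1, false, fun x => ⟨n x - lo, by have := hlo x; have := hhi x; omega⟩,
      by simp, ?_, ?_, ?_⟩
    · intro t
      obtain ⟨z, hz⟩ := hsurj (lo + t.1) (by omega) (by have := t.2; omega)
      refine ⟨z, Fin.ext ?_⟩
      show n z - lo = t.1
      omega
    · intro u v _; rw [hdiag, hdiag]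
    · intro u v huv
      rw [hBapp, TmatNe hk]
      have hu := hlo u
      have hv := hlo v
      constructor
      · rintro (h | h)
        · left
          rw [consecF]
          left
          show n u - lo + 1 = n v - lo
          rw [hcons u v] at h
          omega
        · left
          rw [consecF]
          right
          show n v - lo + 1 = n u - lo
          rw [hcons v u] at h
          omega
      · rintro (h | ⟨hEq, hA⟩)
        · rw [consecF] at h
          rcases h with h | h
        
          · left
            rw [hcons u v]
            have h' : n u - lo + 1 = n v - lo := h
            omega
          · right
            rw [hcons v u]
            have h' : n v - lo + 1 = n u - lo := h
            omega
        · exact absurd (hdiag u) hA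

lemma CmatNe {k : ℕ} (hk : 2 ≤ k) {ch es : ℤ} (hch : ch ≠ 0) (hes : es ≠ 0)
    (u v : Fin k × Fin 2) :
    Cmat k ch es u v ≠ 0 ↔
      ((u.1 = v.1 ∧ ((u.1:ℕ) = 0 ∨ (u.1:ℕ) = k - 1)) ∨
       ((u.1:ℕ) + 1 = (v.1:ℕ) ∨ (v.1:ℕ) + 1 = (u.1:ℕ))) := by
  simp only [Cmat, Matrix.of_apply]
  by_cases h1 : u.1 = v.1
  · rw [if_pos h1]
    have hvv : (u.1:ℕ) = (v.1:ℕ) := congrArg Fin.val h1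
    by_cases h2 : (u.1:ℕ) = 0
    · rw [if_pos h2]
      exact iff_of_true one_ne_zero (Or.inl ⟨h1, Or.inl h2⟩)
    · rw [if_neg h2]
      by_cases h3 : (u.1:ℕ) = k - 1
      · rw [if_pos h3]
        constructor
        · intro _; exact Or.inl ⟨h1, Or.inr h3⟩
        · intro _; split_ifs <;> assumption
      · rw [if_neg h3]
        constructor
        · intro hh; exact absurd rfl hh
        · rintro (⟨-, h | h⟩ | h | h)
          · exact absurd h h2
          · exact absurd h h3
          · omega
          · omega
  · rw [if_neg h1]
    by_cases h2 : (u.1:ℕ) + 1 = (v.1:ℕ)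
    · rw [if_pos h2]
      constructor
      · intro _; exact Or.inr (Or.inl h2)
      · intro _; split_ifs <;> norm_num
    · rw [if_neg h2]
      by_cases h3 : (v.1:ℕ) + 1 = (u.1:ℕ)
      · rw [if_pos h3]
        constructor
        · intro _; exact Or.inr (Or.inr h3)
        · intro _; split_ifs <;> norm_num
      · rw [if_neg h3]
        constructor
        · intro hh; exact absurd rfl hh
        · rintro (⟨hEq, -⟩ | h | h)
          · exact absurd hEq h1
          · exact absurd h h2
          · exact absurd h h3

lemma Cmat_diag_val {k : ℕ} (ch es : ℤ) (w : Fin k × Fin 2) :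
    Cmat k ch es w w = (if (w.1:ℕ) = 0 then 1 else if (w.1:ℕ) = k - 1 then ch else 0) := by
  simp [Cmat]

lemma weak_of_C {k : ℕ} (hk : 2 ≤ k) {ch es : ℤ} (hch : ch ≠ 0) (hes : es ≠ 0)
    (S : Finset (Fin k × Fin 2)) (hconn : Indecomposable (induce (Cmat k ch es) S)) :
    ∃ (m : ℕ) (cyc : Bool) (c : {x // x ∈ S} → Fin m),
      (cyc = true → 3 ≤ m) ∧ WeakProfile (induce (Cmat k ch es) S) m cyc c := by
  haveI hne : Nonempty {x // x ∈ S} := hconn.nonempty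
  have hBapp : ∀ x y : {x // x ∈ S},
      induce (Cmat k ch es) S x y = Cmat k ch es x.1 y.1 := fun _ _ => rfl
  have hdv : ∀ x : {x // x ∈ S}, induce (Cmat k ch es) S x x =
      (if (x.1.1:ℕ) = 0 then 1 else if (x.1.1:ℕ) = k - 1 then ch else 0) :=
    fun x => Cmat_diag_val ch es x.1
  have hdne : ∀ x : {x // x ∈ S},
      (induce (Cmat k ch es) S x x ≠ 0 ↔ ((x.1.1:ℕ) = 0 ∨ (x.1.1:ℕ) = k - 1)) := by
    intro x
    rw [hdv x]
    split_ifs with h1 h2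
    · exact iff_of_true one_ne_zero (Or.inl h1)
    · exact iff_of_true hch (Or.inr h2)
    · constructor
      · intro hh; exact absurd rfl hh
      · rintro (h | h)
        · exact absurd h h1
        · exact absurd h h2
  set n : {x // x ∈ S} → ℕ := fun x => (x.1.1 : ℕ) with hn
  have hnlt : ∀ x, n x < k := fun x => x.1.1.isLt
  have hadjstep : ∀ x y : {x // x ∈ S},
      (graphOf (induce (Cmat k ch es) S)).Adj x y → n x ≤ n y + 1 ∧ n y ≤ n x + 1 := by
    intro x y hadj
    rw [graphOf, SimpleGraph.fromRel_adj] at hadj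
    show (x.1.1:ℕ) ≤ (y.1.1:ℕ) + 1 ∧ (y.1.1:ℕ) ≤ (x.1.1:ℕ) + 1
    obtain ⟨hxy, h1 | h1⟩ := hadj <;> rw [hBapp, CmatNe hk hch hes] at h1 <;>
      rcases h1 with ⟨hEq, -⟩ | h1 | h1 <;>
      first
        | (have := congrArg Fin.val hEq; omega)
        | omega
  obtain ⟨x₀⟩ := hne
  have hTne : (Finset.image n Finset.univ).Nonempty :=
    ⟨n x₀, Finset.mem_image_of_mem _ (Finset.mem_univ _)⟩
  set lo := (Finset.image n Finset.univ).min' hTne with hlodef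
  set hi := (Finset.image n Finset.univ).max' hTne with hhidef
  have hlo : ∀ x, lo ≤ n x :=
    fun x => Finset.min'_le _ _ (Finset.mem_image_of_mem _ (Finset.mem_univ _))
  have hhi : ∀ x, n x ≤ hi :=
    fun x => Finset.le_max' _ _ (Finset.mem_image_of_mem _ (Finset.mem_univ _))
  obtain ⟨xlo, -, hxlo⟩ := Finset.mem_image.mp ((Finset.image n Finset.univ).min'_mem hTne)
  obtain ⟨xhi, -, hxhi⟩ := Finset.mem_image.mp ((Finset.image n Finset.univ).max'_mem hTne)
  have hsurj : ∀ t, lo ≤ t → t ≤ hi → ∃ z, n z = t := by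
    intro t h1 h2
    refine walk_ivt n hadjstep xlo xhi (hconn.preconnected xlo xhi) t (Or.inl ⟨?_, ?_⟩)
    · rw [hxlo]; exact h1
    · rw [hxhi]; exact h2
  have hloh : lo ≤ hi := le_trans (hlo x₀) (hhi x₀)
  refine ⟨hi - lo + 1, false, fun x => ⟨n x - lo, by have := hlo x; have := hhi x; omega⟩,
    by simp, ?_, ?_, ?_⟩
  · intro t
    obtain ⟨z, hz⟩ := hsurj (lo + t.1) (by omega) (by have := t.2; omega)
    refine ⟨z, Fin.ext ?_⟩
    show n z - lo = t.1
    omega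
  · intro u v hc
    have hval : n u - lo = n v - lo := congrArg Fin.val hc
    have hu := hlo u
    have hv := hlo v
    have hvv : (u.1.1:ℕ) = (v.1.1:ℕ) := by
      show n u = n v
      omega
    rw [hdv u, hdv v, hvv]
  · intro u v huv
    have hu := hlo u
    have hv := hlo v
    rw [hBapp, CmatNe hk hch hes]
    constructor
    · rintro (⟨hEq, hd⟩ | h | h)
      · right
        constructor
        · apply Fin.ext
          show n u - lo = n v - lo
          have : (u.1.1:ℕ) = (v.1.1:ℕ) := congrArg Fin.val hEq
          have hnn : n u = n v := this
          omega
        · exact (hdne u).2 hd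
      · left
        rw [consecF]
        left
        show n u - lo + 1 = n v - lo
        have hnn : (n u) + 1 = n v := h
        omega
      · left
        rw [consecF]
        right
        show n v - lo + 1 = n u - lo
        have hnn : (n v) + 1 = n u := h
        omega
    · rintro (h | ⟨hEq, hA⟩)
      · rw [consecF] at h
        rcases h with h | h
        · right
          left
          have h' : n u - lo + 1 = n v - lo := h
          show n u + 1 = n v
          omega
        · right
          right
          have h' : n v - lo + 1 = n u - lo := h
          show n v + 1 = n u
          omega
      · left
        have hval : n u - lo = n v - lo := congrArg Fin.val hEq
        have hvv : n u = n v := by omega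
        refine ⟨Fin.ext hvv, ?_⟩
        exact (hdne u).1 hA

/-- a charged signed graph equivalent to a connected induced subgraph of
some `T_{2k}`, `C_{2k}^{++}` or `C_{2k}^{+-}` and of path rank at least 5 has a profile;
the number of columns of any profile equals the path rank, the partition into columns is
uniquely determined, and the ordering of the columns is determined up to reversal and
(for cycling profiles) cyclic permutation. -/
theorem statement15 (n : ℕ) (A : Matrix (Fin n) (Fin n) ℤ)
    (hA : A.IsSymm) (hent : ∀ i j, A i j = -1 ∨ A i j = 0 ∨ A i j = 1)
    (hequiv : EquivConnSub A)
    (hrank : 5 ≤ pathRank (graphOf A)) :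
    (∃ (k : ℕ) (cyc : Bool) (c : Fin n → Fin k), IsProfile A k cyc c) ∧
    (∀ (k : ℕ) (cyc : Bool) (c : Fin n → Fin k),
      IsProfile A k cyc c → k = pathRank (graphOf A)) ∧
    (∀ (k₁ k₂ : ℕ) (cyc₁ cyc₂ : Bool) (c₁ : Fin n → Fin k₁) (c₂ : Fin n → Fin k₂),
      IsProfile A k₁ cyc₁ c₁ → IsProfile A k₂ cyc₂ c₂ →
      k₁ = k₂ ∧
      (∀ u v : Fin n, c₁ u = c₁ v ↔ c₂ u = c₂ v) ∧
      ∃ t : ℕ, (cyc₁ = true ∨ t % k₁ = 0) ∧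
        ((∀ v : Fin n, (c₂ v : ℕ) = ((c₁ v : ℕ) + t) % k₁) ∨
         (∀ v : Fin n, (c₂ v : ℕ) = ((k₁ - 1 - (c₁ v : ℕ)) + t) % k₁))) := by
  classical
  have hPiff : ∀ (k : ℕ) (cyc : Bool) (c : Fin n → Fin k),
      IsProfile A k cyc c ↔ (3 ≤ k ∧ WeakProfile A k cyc c) := by
    intro k cyc c
    constructor
    · rintro ⟨h1, h2, h3, h4⟩; exact ⟨h1, h2, h3, h4⟩
    · rintro ⟨h1, h2, h3, h4⟩; exact ⟨h1, h2, h3, h4⟩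
  obtain ⟨m, cyc, c, hc3, hW⟩ :
      ∃ (m : ℕ) (cyc : Bool) (c : Fin n → Fin m),
        (cyc = true → 3 ≤ m) ∧ WeakProfile A m cyc c := by
    obtain ⟨k, hcase⟩ := hequiv
    rcases hcase with ⟨S, hconn, hme⟩ | ⟨S, ⟨hconn, hme⟩ | ⟨hconn, hme⟩⟩
    · obtain ⟨m, cyc, cb, hc3, hWb⟩ := weak_of_T (by omega) S hconn
      obtain ⟨c', hW'⟩ := weak_transfer hme hWb
      exact ⟨m, cyc, c', hc3, hW'⟩
    · obtain ⟨m, cyc, cb, hc3, hWb⟩ :=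
        weak_of_C (by omega) (one_ne_zero) (neg_ne_zero.mpr one_ne_zero) S hconn
      obtain ⟨c', hW'⟩ := weak_transfer hme hWb
      exact ⟨m, cyc, c', hc3, hW'⟩
    · obtain ⟨m, cyc, cb, hc3, hWb⟩ :=
        weak_of_C (by omega) (neg_ne_zero.mpr one_ne_zero) (one_ne_zero) S hconn
      obtain ⟨c', hW'⟩ := weak_transfer hme hWb
      exact ⟨m, cyc, c', hc3, hW'⟩
  obtain ⟨hmr, h5m⟩ := weak_rank hW hc3 hrank
  refine ⟨⟨m, cyc, c, (hPiff _ _ _).2 ⟨by omega, hW⟩⟩, ?_, ?_⟩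
  · intro k cyc' c' hP
    obtain ⟨h3k, hW'⟩ := (hPiff _ _ _).1 hP
    exact (weak_rank hW' (fun _ => h3k) hrank).1
  · intro k₁ k₂ cyc₁ cyc₂ c₁ c₂ hP₁ hP₂
    obtain ⟨h31, hW₁⟩ := (hPiff _ _ _).1 hP₁
    obtain ⟨h32, hW₂⟩ := (hPiff _ _ _).1 hP₂
    obtain ⟨he₁, h51⟩ := weak_rank hW₁ (fun _ => h31) hrank
    obtain ⟨he₂, h52⟩ := weak_rank hW₂ (fun _ => h32) hrank
    have hk12 : k₂ = k₁ := by omega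
    subst hk12
    refine ⟨rfl, ?_, ?_⟩
    · intro u v
      exact ⟨fun h => same_col hW₁ hW₂ h51 h, fun h => same_col hW₂ hW₁ h51 h⟩
    · set f := Function.surjInv hW₁.1 with hf
      have hcf : ∀ x, c₁ (f x) = x := fun x => Function.surjInv_eq hW₁.1 x
      set φ : Fin k₂ → Fin k₂ := fun x => c₂ (f x) with hphidef
      have hφc : ∀ v, c₂ v = φ (c₁ v) := by
        intro v
        exact same_col hW₁ hW₂ h51 (show c₁ v = c₁ (f (c₁ v)) from (hcf _).symm)
      have hφinj : Function.Injective φ := by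
        intro x y h
        have := same_col hW₂ hW₁ h51 h
        rwa [hcf, hcf] at this
      have hφsurj : Function.Surjective φ := by
        intro t
        obtain ⟨v, hv⟩ := hW₂.1 t
        exact ⟨c₁ v, by rw [← hφc v, hv]⟩
      have hφcons : ∀ x y, x ≠ y → (Consec cyc₁ k₂ x y ↔ Consec cyc₂ k₂ (φ x) (φ y)) := by
        intro x y hxy
        have hfne : f x ≠ f y := fun h => hxy (by rw [← hcf x, ← hcf y, h])
        have h1 := hW₁.2.2 (f x) (f y) hfne
        have h2 := hW₂.2.2 (f x) (f y) hfne
        rw [hcf, hcf] at h1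
        constructor
        · intro hcs
          rcases h2.1 (h1.2 (Or.inl hcs)) with hcs' | ⟨hEq, -⟩
          · exact hcs'
          · exfalso
            have hcc := same_col hW₂ hW₁ h51 hEq
            rw [hcf, hcf] at hcc
            exact hxy hcc
        · intro hcs
          rcases h1.1 (h2.2 (Or.inl hcs)) with hcs' | ⟨hEq, -⟩
          · exact hcs'
          · exact absurd hEq hxy
      obtain ⟨t, hside, hform⟩ := order_classify h51 cyc₁ cyc₂ φ hφinj hφsurj hφcons
      refine ⟨t, hside, ?_⟩
      rcases hform with hform | hform
      · left; intro v; rw [hφc v]; exact hform (c₁ v)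
      · right; intro v; rw [hφc v]; exact hform (c₁ v)


end
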